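/- Let X take values in {1,...,n} (n ≥ 3) with p(1) ≥ ... ≥ p(n) > 0, let 2 ≤ i ≤ n-1, and let a ⊆ {2,...,n} be nonempty with a not contained in {i+1,...,n}. Writing X_c for the indicator of X ∈ c, we have: H(X_{{i}} | X_{{i+1}}, ..., X_{{n}}) > 0, and both H(X_{{i}} | X_{{i+1}}, ..., X_{{n}}) ≤ H(X_a | X_{{i+1}}, ..., X_{{n}}) and H(X_{{i}}) ≤ H(X_a). -/

import Mathlib

open scoped BigOperators

/-- `μ` is a probability mass function on the finite sample space `Ω`. -/
def IsPMF {Ω : Type*} [Fintype Ω] (μ : Ω → ℝ) : Prop :=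
  (∀ ω, 0 ≤ μ ω) ∧ ∑ ω, μ ω = 1

/-- The probability that the random variable `X` takes the value `s`. -/
noncomputable def prob {Ω S : Type*} [Fintype Ω] [DecidableEq S]
    (μ : Ω → ℝ) (X : Ω → S) (s : S) : ℝ :=
  ∑ ω ∈ Finset.univ.filter fun ω => X ω = s, μ ω

/-- Shannon entropy (natural logarithm) of a random variable with finite codomain. -/
noncomputable def entropy {Ω S : Type*} [Fintype Ω] [Fintype S] [DecidableEq S]
    (μ : Ω → ℝ) (X : Ω → S) : ℝ :=
  ∑ s, Real.negMulLog (prob μ X s)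

/-- Conditional Shannon entropy `H(X | Y) = H(X, Y) - H(Y)`. -/
noncomputable def condEntropy {Ω S T : Type*} [Fintype Ω] [Fintype S] [Fintype T]
    [DecidableEq S] [DecidableEq T] (μ : Ω → ℝ) (X : Ω → S) (Y : Ω → T) : ℝ :=
  entropy μ (fun ω => (X ω, Y ω)) - entropy μ Y


section Helpers

open Real Finset


private lemma negMulLog_scaled (q t : ℝ) :
    negMulLog (q * t) + negMulLog (q * (1 - t)) = q * Real.binEntropy t + negMulLog q := by
  rw [Real.binEntropy_eq_negMulLog_add_negMulLog_one_sub, Real.negMulLog_mul,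
    Real.negMulLog_mul]
  ring

private lemma lemA {x y q : ℝ} (hx : 0 ≤ x) (hxy : x ≤ y) (hs : x + y ≤ q) :
    Real.negMulLog x + Real.negMulLog (q - x) ≤ Real.negMulLog y + Real.negMulLog (q - y) := by
  have hy : 0 ≤ y := le_trans hx hxy
  have hq0 : 0 ≤ q := le_trans (by linarith) hs
  rcases eq_or_lt_of_le hq0 with hq | hq
  · have hx0 : x = 0 := by linarith
    have hy0 : y = 0 := by linarith
    simp [hx0, hy0, ← hq]
  · have hxq : x = q * (x / q) := by field_simp
    have hyq : y = q * (y / q) := by field_simp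
    have h1 : q - x = q * (1 - x / q) := by field_simp
    have h2 : q - y = q * (1 - y / q) := by field_simp
    have hu0 : 0 ≤ x / q := div_nonneg hx hq.le
    have huv : x / q ≤ y / q := div_le_div_of_nonneg_right hxy hq.le
    have hsum : x / q + y / q ≤ 1 := by
      rw [← add_div, div_le_one hq]; exact hs
    have key : Real.binEntropy (x / q) ≤ Real.binEntropy (y / q) := by
      by_cases hv : y / q ≤ 2⁻¹
      · exact Real.binEntropy_strictMonoOn.monotoneOn ⟨hu0, le_trans huv hv⟩
          ⟨le_trans hu0 huv, hv⟩ huv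
      · rw [← Real.binEntropy_one_sub (y / q)]
        exact Real.binEntropy_strictMonoOn.monotoneOn ⟨hu0, by linarith⟩
          ⟨by linarith, by linarith⟩ (by linarith)
    calc Real.negMulLog x + Real.negMulLog (q - x)
        = q * Real.binEntropy (x / q) + Real.negMulLog q := by
          rw [h1]; nth_rewrite 1 [hxq]; exact negMulLog_scaled q (x / q)
      _ ≤ q * Real.binEntropy (y / q) + Real.negMulLog q := by
          have := mul_le_mul_of_nonneg_left key hq.le; linarith
      _ = Real.negMulLog y + Real.negMulLog (q - y) := by
          rw [h2]; nth_rewrite 2 [hyq]; exact (negMulLog_scaled q (y / q)).symm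

private lemma lemB {x z : ℝ} (hx : 0 < x) (hz : 0 < z) :
    Real.negMulLog (x + z) < Real.negMulLog x + Real.negMulLog z := by
  have h1 : Real.log x < Real.log (x + z) := Real.log_lt_log hx (by linarith)
  have h2 : Real.log z < Real.log (x + z) := Real.log_lt_log hz (by linarith)
  simp only [Real.negMulLog]
  nlinarith [mul_lt_mul_of_pos_left h1 hx, mul_lt_mul_of_pos_left h2 hz]

private lemma sum_event_eq {Ω : Type*} [Fintype Ω] {μ : Ω → ℝ} {X : Ω → ℕ} {n : ℕ}
    (hnn : ∀ ω, 0 ≤ μ ω) (hrange : ∀ ω, 0 < μ ω → X ω ∈ Finset.Icc 1 n)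
    (E : Ω → Prop) [DecidablePred E] (P : ℕ → Prop) [DecidablePred P]
    (hEP : ∀ ω, 0 < μ ω → (E ω ↔ P (X ω))) :
    ∑ ω ∈ Finset.univ.filter (fun ω => E ω), μ ω
      = ∑ m ∈ (Finset.Icc 1 n).filter P, prob μ X m := by
  unfold prob
  rw [Finset.sum_filter]
  have hrhs : ∀ m, (∑ ω ∈ Finset.univ.filter fun ω => X ω = m, μ ω)
      = ∑ ω : Ω, if X ω = m then μ ω else 0 := fun m => Finset.sum_filter _ _
  simp only [hrhs]
  rw [Finset.sum_comm]
  refine Finset.sum_congr rfl fun ω _ => ?_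
  rw [Finset.sum_ite_eq ((Finset.Icc 1 n).filter P) (X ω) (fun _ => μ ω)]
  rcases eq_or_lt_of_le (hnn ω) with h0 | hpos
  · split_ifs <;> simp [← h0]
  · have hx := hrange ω hpos
    have := hEP ω hpos
    simp [Finset.mem_filter, hx, this]


private lemma entropy_eq_sum {Ω S : Type*} [Fintype Ω] [Fintype S] [DecidableEq S]
    {μ : Ω → ℝ} (hnn : ∀ ω, 0 ≤ μ ω) (Z : Ω → S) (T : Finset S)
    (hT : ∀ ω, 0 < μ ω → Z ω ∈ T) :
    entropy μ Z = ∑ s ∈ T, Real.negMulLog (prob μ Z s) := by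
  unfold entropy
  refine (Finset.sum_subset (Finset.subset_univ T) fun s _ hs => ?_).symm
  have : prob μ Z s = 0 := by
    refine Finset.sum_eq_zero fun ω hω => ?_
    rcases eq_or_lt_of_le (hnn ω) with h0 | hpos
    · exact h0.symm
    · exfalso
      simp only [Finset.mem_filter] at hω
      exact hs (hω.2 ▸ hT ω hpos)
  simp [this]

private lemma condEntropy_formula {Ω : Type*} [Fintype Ω] {μ : Ω → ℝ} {X : Ω → ℕ} {n : ℕ}
    (hnn : ∀ ω, 0 ≤ μ ω) (hrange : ∀ ω, 0 < μ ω → X ω ∈ Finset.Icc 1 n)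
    (i : ℕ) (hi : i ≤ n) (Q : ℕ → Prop) [DecidablePred Q] :
    condEntropy μ (fun ω => decide (Q (X ω)))
        (fun ω (j : {j // j ∈ Finset.Icc (i + 1) n}) => decide (X ω = j.1))
      = Real.negMulLog (∑ m ∈ (Finset.Icc 1 i).filter Q, prob μ X m)
        + Real.negMulLog ((∑ m ∈ Finset.Icc 1 i, prob μ X m)
            - ∑ m ∈ (Finset.Icc 1 i).filter Q, prob μ X m)
        - Real.negMulLog (∑ m ∈ Finset.Icc 1 i, prob μ X m) := by
  set Y : Ω → ({j // j ∈ Finset.Icc (i + 1) n} → Bool) :=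
    fun ω j => decide (X ω = j.1) with hY
  set g : ℕ → ({j // j ∈ Finset.Icc (i + 1) n} → Bool) :=
    fun m j => decide (m = j.1) with hg
  set c₀ : {j // j ∈ Finset.Icc (i + 1) n} → Bool := fun _ => false with hc₀
  -- basic facts
  have hYg : ∀ ω m, m ∈ Finset.Icc (i + 1) n → (Y ω = g m ↔ X ω = m) := by
    intro ω m hm
    constructor
    · intro h
      have := congrFun h ⟨m, hm⟩
      simpa [hY, hg] using this
    · intro h
      funext j
      simp [hY, hg, h]
  have hYc : ∀ ω, Y ω = c₀ ↔ X ω ∉ Finset.Icc (i + 1) n := by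
    intro ω
    constructor
    · intro h hx
      have := congrFun h ⟨X ω, hx⟩
      simpa [hY, hc₀] using this
    · intro h
      funext j
      have : X ω ≠ j.1 := fun he => h (he ▸ j.2)
      simp [hY, hc₀, this]
  have hYc' : ∀ ω, 0 < μ ω → (Y ω = c₀ ↔ X ω ≤ i) := by
    intro ω hω
    have hx := hrange ω hω
    rw [hYc]
    simp only [Finset.mem_Icc] at hx ⊢
    omega
  have hgc : ∀ m ∈ Finset.Icc (i + 1) n, g m ≠ c₀ := by
    intro m hm h
    have := congrFun h ⟨m, hm⟩
    simpa [hg, hc₀] using this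
  have hginj : ∀ m ∈ Finset.Icc (i + 1) n, ∀ m' ∈ Finset.Icc (i + 1) n,
      g m = g m' → m = m' := by
    intro m hm m' _ h
    have := congrFun h ⟨m, hm⟩
    simp [hg] at this
    exact this.symm
  -- probabilities for Y
  have hprobYg : ∀ m ∈ Finset.Icc (i + 1) n, prob μ Y (g m) = prob μ X m := by
    intro m hm
    unfold prob
    congr 1
    exact Finset.filter_congr fun ω _ => by
      simpa using hYg ω m hm
  have hprobYc : prob μ Y c₀ = ∑ m ∈ Finset.Icc 1 i, prob μ X m := by
    unfold prob
    rw [sum_event_eq hnn hrange (fun ω => Y ω = c₀) (fun m => m ≤ i) hYc']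
    congr 1
    ext m
    simp only [Finset.mem_filter, Finset.mem_Icc]
    omega
  -- entropy of Y
  have hEY : entropy μ Y
      = Real.negMulLog (∑ m ∈ Finset.Icc 1 i, prob μ X m)
        + ∑ m ∈ Finset.Icc (i + 1) n, Real.negMulLog (prob μ X m) := by
    rw [entropy_eq_sum hnn Y (insert c₀ ((Finset.Icc (i + 1) n).image g))
      (fun ω hω => by
        have hx := hrange ω hω
        by_cases hXi : X ω ∈ Finset.Icc (i + 1) n
        · exact Finset.mem_insert_of_mem
            (Finset.mem_image.mpr ⟨X ω, hXi, ((hYg ω (X ω) hXi).mpr rfl).symm⟩)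
        · exact Finset.mem_insert.mpr (Or.inl ((hYc ω).mpr hXi)))]
    rw [Finset.sum_insert (fun h => by
      obtain ⟨m, hm, hgm⟩ := Finset.mem_image.mp h
      exact hgc m hm hgm)]
    rw [Finset.sum_image hginj, hprobYc]
    congr 1
    exact Finset.sum_congr rfl fun m hm => by rw [hprobYg m hm]
  -- the joint variable
  set Z : Ω → Bool × ({j // j ∈ Finset.Icc (i + 1) n} → Bool) :=
    fun ω => (decide (Q (X ω)), Y ω) with hZ
  have hprobZg : ∀ m ∈ Finset.Icc (i + 1) n,
      prob μ Z (decide (Q m), g m) = prob μ X m := by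
    intro m hm
    unfold prob
    congr 1
    refine Finset.filter_congr fun ω _ => ?_
    constructor
    · intro h
      exact (hYg ω m hm).mp (congrArg Prod.snd h)
    · intro h
      have h2 : Y ω = g m := (hYg ω m hm).mpr h
      simp [hZ, h, h2]
  have hprobZt : prob μ Z (true, c₀)
      = ∑ m ∈ (Finset.Icc 1 i).filter Q, prob μ X m := by
    unfold prob
    rw [sum_event_eq hnn hrange (fun ω => Z ω = (true, c₀))
      (fun m => Q m ∧ m ≤ i) (fun ω hω => by
        show Z ω = (true, c₀) ↔ _
        rw [hZ]
        simp only [Prod.mk.injEq, decide_eq_true_eq]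
        rw [hYc' ω hω])]
    congr 1
    ext m
    simp only [Finset.mem_filter, Finset.mem_Icc]
    constructor
    · rintro ⟨⟨h1, _⟩, hQ, h3⟩; exact ⟨⟨h1, h3⟩, hQ⟩
    · rintro ⟨⟨h1, h3⟩, hQ⟩; exact ⟨⟨h1, le_trans h3 hi⟩, hQ, h3⟩
  have hprobZf : prob μ Z (false, c₀)
      = ∑ m ∈ (Finset.Icc 1 i).filter (fun m => ¬ Q m), prob μ X m := by
    unfold prob
    rw [sum_event_eq hnn hrange (fun ω => Z ω = (false, c₀))
      (fun m => ¬ Q m ∧ m ≤ i) (fun ω hω => by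
        show Z ω = (false, c₀) ↔ _
        rw [hZ]
        simp only [Prod.mk.injEq, decide_eq_false_iff_not]
        rw [hYc' ω hω])]
    congr 1
    ext m
    simp only [Finset.mem_filter, Finset.mem_Icc]
    constructor
    · rintro ⟨⟨h1, _⟩, hQ, h3⟩; exact ⟨⟨h1, h3⟩, hQ⟩
    · rintro ⟨⟨h1, h3⟩, hQ⟩; exact ⟨⟨h1, le_trans h3 hi⟩, hQ, h3⟩
  -- entropy of Z
  have hEZ : entropy μ Z
      = Real.negMulLog (∑ m ∈ (Finset.Icc 1 i).filter Q, prob μ X m)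
        + Real.negMulLog (∑ m ∈ (Finset.Icc 1 i).filter (fun m => ¬ Q m), prob μ X m)
        + ∑ m ∈ Finset.Icc (i + 1) n, Real.negMulLog (prob μ X m) := by
    rw [entropy_eq_sum hnn Z
      (insert (true, c₀) (insert (false, c₀)
        ((Finset.Icc (i + 1) n).image (fun m => ((decide (Q m) : Bool), g m)))))
      (fun ω hω => by
        have hx := hrange ω hω
        by_cases hXi : X ω ∈ Finset.Icc (i + 1) n
        · refine Finset.mem_insert_of_mem (Finset.mem_insert_of_mem ?_)
          refine Finset.mem_image.mpr ⟨X ω, hXi, ?_⟩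
          rw [hZ]
        · have hY0 : Y ω = c₀ := (hYc ω).mpr hXi
          rcases Bool.eq_false_or_eq_true (decide (Q (X ω))) with hb | hb
          · have hZω : Z ω = (true, c₀) := by simp [hZ, hY0, hb]
            show Z ω ∈ _
            rw [hZω]
            exact Finset.mem_insert_self _ _
          · have hZω : Z ω = (false, c₀) := by simp [hZ, hY0, hb]
            show Z ω ∈ _
            rw [hZω]
            exact Finset.mem_insert_of_mem (Finset.mem_insert_self _ _))]
    rw [Finset.sum_insert (fun h => by
      rcases Finset.mem_insert.mp h with h | h
      · exact absurd (congrArg Prod.fst h) (by simp)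
      · obtain ⟨m, hm, he⟩ := Finset.mem_image.mp h
        exact hgc m hm (congrArg Prod.snd he))]
    rw [Finset.sum_insert (fun h => by
      obtain ⟨m, hm, he⟩ := Finset.mem_image.mp h
      exact hgc m hm (congrArg Prod.snd he))]
    rw [Finset.sum_image (fun m hm m' hm' h =>
      hginj m hm m' hm' (congrArg Prod.snd h))]
    rw [hprobZt, hprobZf]
    have : ∀ m ∈ Finset.Icc (i + 1) n,
        Real.negMulLog (prob μ Z (decide (Q m), g m)) = Real.negMulLog (prob μ X m) :=
      fun m hm => by rw [hprobZg m hm]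
    rw [Finset.sum_congr rfl this]
    ring
  -- put it together
  have hsplit : (∑ m ∈ (Finset.Icc 1 i).filter Q, prob μ X m)
      + ∑ m ∈ (Finset.Icc 1 i).filter (fun m => ¬ Q m), prob μ X m
      = ∑ m ∈ Finset.Icc 1 i, prob μ X m :=
    Finset.sum_filter_add_sum_filter_not _ _ _
  have hfinal : condEntropy μ (fun ω => decide (Q (X ω))) Y
      = entropy μ Z - entropy μ Y := rfl
  rw [hfinal, hEZ, hEY]
  have : (∑ m ∈ (Finset.Icc 1 i).filter (fun m => ¬ Q m), prob μ X m)
      = (∑ m ∈ Finset.Icc 1 i, prob μ X m)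
        - ∑ m ∈ (Finset.Icc 1 i).filter Q, prob μ X m := by linarith
  rw [this]
  ring

private lemma sum_prob_total {Ω : Type*} [Fintype Ω] {μ : Ω → ℝ} {X : Ω → ℕ} {n : ℕ}
    (hnn : ∀ ω, 0 ≤ μ ω) (hrange : ∀ ω, 0 < μ ω → X ω ∈ Finset.Icc 1 n)
    (htot : ∑ ω, μ ω = 1) :
    ∑ m ∈ Finset.Icc 1 n, prob μ X m = 1 := by
  have h := sum_event_eq (μ := μ) hnn hrange (fun _ => True) (fun _ => True)
    (fun ω hω => Iff.rfl)
  simp only [Finset.filter_true] at h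
  rw [← h, ← htot]


private lemma entropy_formula {Ω : Type*} [Fintype Ω] {μ : Ω → ℝ} {X : Ω → ℕ} {n : ℕ}
    (hnn : ∀ ω, 0 ≤ μ ω) (hrange : ∀ ω, 0 < μ ω → X ω ∈ Finset.Icc 1 n)
    (htot : ∑ ω, μ ω = 1) (Q : ℕ → Prop) [DecidablePred Q] :
    entropy μ (fun ω => decide (Q (X ω)))
      = Real.negMulLog (∑ m ∈ (Finset.Icc 1 n).filter Q, prob μ X m)
        + Real.negMulLog (1 - ∑ m ∈ (Finset.Icc 1 n).filter Q, prob μ X m) := by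
  have htrue : prob μ (fun ω => decide (Q (X ω))) true
      = ∑ m ∈ (Finset.Icc 1 n).filter Q, prob μ X m := by
    unfold prob
    exact sum_event_eq hnn hrange _ Q (fun ω hω => by simp)
  have hfalse : prob μ (fun ω => decide (Q (X ω))) false
      = ∑ m ∈ (Finset.Icc 1 n).filter (fun m => ¬ Q m), prob μ X m := by
    unfold prob
    exact sum_event_eq hnn hrange _ (fun m => ¬ Q m) (fun ω hω => by simp)
  have hT := sum_prob_total hnn hrange htot
  have hsplit := Finset.sum_filter_add_sum_filter_not (Finset.Icc 1 n) Q (prob μ X)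
  unfold entropy
  rw [Fintype.sum_bool, htrue, hfalse]
  have h2 : ∑ m ∈ (Finset.Icc 1 n).filter (fun m => ¬ Q m), prob μ X m
      = 1 - ∑ m ∈ (Finset.Icc 1 n).filter Q, prob μ X m := by linarith
  rw [h2]

end Helpers

/-- Property 5 (singleton `Xᵢ`): with `p(1) ≥ … ≥ p(n) > 0`, `2 ≤ i ≤ n-1`, and nonempty
`a ⊆ {2,…,n}` not contained in `{i+1,…,n}`:
`H(X_{i} | X_{i+1},…,X_{n}) > 0`, and the singleton indicator minimizes both the conditional
entropy given `X_{i+1},…,X_{n}` and the unconditional entropy among such `X_a`. -/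

theorem singleton_indicator_min (n : ℕ) (hn : 3 ≤ n) {Ω : Type*} [Fintype Ω]
    (μ : Ω → ℝ) (hμ : IsPMF μ) (X : Ω → ℕ)
    (hrange : ∀ ω, 0 < μ ω → X ω ∈ Finset.Icc 1 n)
    (hpos : ∀ j ∈ Finset.Icc 1 n, 0 < prob μ X j)
    (hmono : ∀ j k, 1 ≤ j → j ≤ k → k ≤ n → prob μ X k ≤ prob μ X j)
    (i : ℕ) (hi2 : 2 ≤ i) (hin : i ≤ n - 1)
    (a : Finset ℕ) (ha : a ⊆ Finset.Icc 2 n) (hane : a.Nonempty)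
    (hnot : ¬ a ⊆ Finset.Icc (i + 1) n) :
    0 < condEntropy μ (fun ω => decide (X ω = i))
        (fun ω (j : {j // j ∈ Finset.Icc (i + 1) n}) => decide (X ω = j.1)) ∧
    condEntropy μ (fun ω => decide (X ω = i))
        (fun ω (j : {j // j ∈ Finset.Icc (i + 1) n}) => decide (X ω = j.1)) ≤
      condEntropy μ (fun ω => decide (X ω ∈ a))
        (fun ω (j : {j // j ∈ Finset.Icc (i + 1) n}) => decide (X ω = j.1)) ∧
    entropy μ (fun ω => decide (X ω = i)) ≤ entropy μ (fun ω => decide (X ω ∈ a)) := by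
  have hin' : i ≤ n := le_trans hin (Nat.sub_le n 1)
  have hiIcc : i ∈ Finset.Icc 1 n := by simp [Finset.mem_Icc]; omega
  -- the formulas
  have h1 : condEntropy μ (fun ω => decide (X ω = i))
        (fun ω (j : {j // j ∈ Finset.Icc (i + 1) n}) => decide (X ω = j.1))
      = Real.negMulLog (∑ m ∈ (Finset.Icc 1 i).filter (fun m => m = i), prob μ X m)
        + Real.negMulLog ((∑ m ∈ Finset.Icc 1 i, prob μ X m)
            - ∑ m ∈ (Finset.Icc 1 i).filter (fun m => m = i), prob μ X m)
        - Real.negMulLog (∑ m ∈ Finset.Icc 1 i, prob μ X m) :=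
    condEntropy_formula hμ.1 hrange i hin' (fun m => m = i)
  have h2 : condEntropy μ (fun ω => decide (X ω ∈ a))
        (fun ω (j : {j // j ∈ Finset.Icc (i + 1) n}) => decide (X ω = j.1))
      = Real.negMulLog (∑ m ∈ (Finset.Icc 1 i).filter (fun m => m ∈ a), prob μ X m)
        + Real.negMulLog ((∑ m ∈ Finset.Icc 1 i, prob μ X m)
            - ∑ m ∈ (Finset.Icc 1 i).filter (fun m => m ∈ a), prob μ X m)
        - Real.negMulLog (∑ m ∈ Finset.Icc 1 i, prob μ X m) :=
    condEntropy_formula hμ.1 hrange i hin' (fun m => m ∈ a)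
  have h3 : entropy μ (fun ω => decide (X ω = i))
      = Real.negMulLog (∑ m ∈ (Finset.Icc 1 n).filter (fun m => m = i), prob μ X m)
        + Real.negMulLog (1 - ∑ m ∈ (Finset.Icc 1 n).filter (fun m => m = i), prob μ X m) :=
    entropy_formula hμ.1 hrange hμ.2 (fun m => m = i)
  have h4 : entropy μ (fun ω => decide (X ω ∈ a))
      = Real.negMulLog (∑ m ∈ (Finset.Icc 1 n).filter (fun m => m ∈ a), prob μ X m)
        + Real.negMulLog (1 - ∑ m ∈ (Finset.Icc 1 n).filter (fun m => m ∈ a), prob μ X m) :=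
    entropy_formula hμ.1 hrange hμ.2 (fun m => m ∈ a)
  -- simplify singleton filters
  have hfi : (Finset.Icc 1 i).filter (fun m => m = i) = {i} := by
    ext m; simp [Finset.mem_filter, Finset.mem_Icc]; omega
  have hfi' : (Finset.Icc 1 n).filter (fun m => m = i) = {i} := by
    ext m; simp [Finset.mem_filter, Finset.mem_Icc]; omega
  rw [hfi, Finset.sum_singleton] at h1
  rw [hfi', Finset.sum_singleton] at h3
  -- notation
  set p : ℕ → ℝ := prob μ X with hp
  set q : ℝ := ∑ m ∈ Finset.Icc 1 i, p m with hq
  set s : ℝ := ∑ m ∈ (Finset.Icc 1 i).filter (fun m => m ∈ a), p m with hs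
  set t : ℝ := ∑ m ∈ (Finset.Icc 1 n).filter (fun m => m ∈ a), p m with ht
  -- the special element of a
  obtain ⟨m₀, hm₀a, hm₀n⟩ := Finset.not_subset.mp hnot
  have hm₀2n : m₀ ∈ Finset.Icc 2 n := ha hm₀a
  simp only [Finset.mem_Icc] at hm₀2n
  have hm₀i : m₀ ≤ i := by
    simp only [Finset.mem_Icc, not_and, not_le] at hm₀n
    omega
  -- positivity / basic bounds
  have hpi_pos : 0 < p i := hpos i hiIcc
  have hp1i : p i ≤ p 1 := hmono 1 i le_rfl (by omega) hin'
  have hpm₀_pos : 0 < p m₀ := hpos m₀ (by simp [Finset.mem_Icc]; omega)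
  have hpim₀ : p i ≤ p m₀ := hmono m₀ i (by omega) hm₀i hin'
  have hnonneg : ∀ m ∈ Finset.Icc 1 n, 0 ≤ p m := fun m hm => (hpos m hm).le
  -- p i ≤ s
  have hpm₀_le_s : p m₀ ≤ s := by
    refine Finset.single_le_sum (fun m hm => ?_) ?_
    · refine hnonneg m ?_
      simp only [Finset.mem_filter, Finset.mem_Icc] at hm
      simp only [Finset.mem_Icc]
      omega
    · simp only [Finset.mem_filter, Finset.mem_Icc]
      exact ⟨⟨by omega, hm₀i⟩, hm₀a⟩
  have hpi_le_s : p i ≤ s := le_trans hpim₀ hpm₀_le_s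
  -- q splits off p 1
  have hIcc1i : Finset.Icc 1 i = insert 1 (Finset.Icc 2 i) := by
    ext m; simp [Finset.mem_insert, Finset.mem_Icc]; omega
  have hq_split : q = p 1 + ∑ m ∈ Finset.Icc 2 i, p m := by
    rw [hq, hIcc1i, Finset.sum_insert (by simp [Finset.mem_Icc])]
  have hs_le : s ≤ ∑ m ∈ Finset.Icc 2 i, p m := by
    refine Finset.sum_le_sum_of_subset_of_nonneg ?_ (fun m hm _ => ?_)
    · intro m hm
      simp only [Finset.mem_filter, Finset.mem_Icc] at hm
      have := ha hm.2
      simp only [Finset.mem_Icc] at this ⊢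
      omega
    · refine hnonneg m ?_
      simp only [Finset.mem_Icc] at hm ⊢
      omega
  have hcondA : p i + s ≤ q := by linarith
  refine ⟨?_, ?_, ?_⟩
  · -- positivity
    rw [h1]
    have hqpi : 0 < q - p i := by linarith
    have hB := lemB hpi_pos hqpi
    rw [show p i + (q - p i) = q by ring] at hB
    linarith
  · -- conditional comparison
    rw [h1, h2]
    have := lemA hpi_pos.le hpi_le_s hcondA
    linarith
  · -- unconditional comparison
    rw [h3, h4]
    have hT := sum_prob_total hμ.1 hrange hμ.2
    have hpm₀_le_t : p m₀ ≤ t := by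
      refine Finset.single_le_sum (fun m hm => ?_) ?_
      · refine hnonneg m ?_
        simp only [Finset.mem_filter] at hm
        exact hm.1
      · simp only [Finset.mem_filter, Finset.mem_Icc]
        exact ⟨⟨by omega, by omega⟩, hm₀a⟩
    have hpi_le_t : p i ≤ t := le_trans hpim₀ hpm₀_le_t
    have hIcc1n : Finset.Icc 1 n = insert 1 (Finset.Icc 2 n) := by
      ext m; simp [Finset.mem_insert, Finset.mem_Icc]; omega
    have hT_split : (1 : ℝ) = p 1 + ∑ m ∈ Finset.Icc 2 n, p m := by
      rw [← hT, hIcc1n, Finset.sum_insert (by simp [Finset.mem_Icc])]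
    have ht_le : t ≤ ∑ m ∈ Finset.Icc 2 n, p m := by
      refine Finset.sum_le_sum_of_subset_of_nonneg ?_ (fun m hm _ => ?_)
      · intro m hm
        simp only [Finset.mem_filter] at hm
        have := ha hm.2
        simp only [Finset.mem_Icc] at this ⊢
        omega
      · refine hnonneg m ?_
        simp only [Finset.mem_Icc] at hm ⊢
        omega
    have hcondA' : p i + t ≤ 1 := by linarith
    have := lemA hpi_pos.le hpi_le_t hcondA'
    linarith
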